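/- Let γ ∈ [1/2, 1), T a finite set, R₁ : T → ℝ with non-constant discounted return G₁ satisfying G₁(ξ) > 0 for all ξ. Then there is no function R₂ : T → ℝ whose discounted return G₂ satisfies G₂(ξ) = ln(G₁(ξ)) for all ξ ∈ T^ℕ. -/

import Mathlib

private lemma sum_aux {T : Type*} [Fintype T] [Nonempty T] (γ : ℝ) (hγ0 : 0 ≤ γ)
    (hγ1 : γ < 1) (R : T → ℝ) (ξ : ℕ → T) :
    Summable (fun j : ℕ => γ^j * R (ξ j)) := by
  have hM : ∀ j : ℕ, ‖γ^j * R (ξ j)‖ ≤ γ^j * (Finset.univ.sup' Finset.univ_nonempty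
      (fun t => |R t|)) := by
    intro j
    rw [norm_mul, norm_pow, Real.norm_eq_abs, Real.norm_eq_abs, abs_of_nonneg hγ0]
    exact mul_le_mul_of_nonneg_left
      (Finset.le_sup' (fun t => |R t|) (Finset.mem_univ (ξ j)))
      (pow_nonneg hγ0 j)
  exact Summable.of_norm_bounded
    ((summable_geometric_of_lt_one hγ0 hγ1).mul_right _) hM

private lemma cons_aux {T : Type*} [Fintype T] [Nonempty T] (γ : ℝ) (hγ0 : 0 ≤ γ)
    (hγ1 : γ < 1) (R : T → ℝ) (t : T) (ξ : ℕ → T) :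
    (∑' j : ℕ, γ^j * R ((fun n => Nat.casesOn n t ξ : ℕ → T) j))
      = R t + γ * ∑' j : ℕ, γ^j * R (ξ j) := by
  rw [Summable.tsum_eq_zero_add (sum_aux γ hγ0 hγ1 R _)]
  simp only [pow_zero, one_mul]
  congr 1
  rw [← tsum_mul_left]
  exact tsum_congr fun j => by ring

/-- No Markovian reward realizes the logarithm of a non-constant positive return. -/
theorem stmt_5 (γ : ℝ) (hγ : 1/2 ≤ γ) (hγ1 : γ < 1)
    (T : Type*) [Fintype T]
    (R₁ : T → ℝ)
    (hpos : ∀ ξ : ℕ → T, 0 < ∑' j : ℕ, γ^j * R₁ (ξ j))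
    (hnc : ¬ ∀ ξ ξ' : ℕ → T,
      (∑' j : ℕ, γ^j * R₁ (ξ j)) = ∑' j : ℕ, γ^j * R₁ (ξ' j)) :
    ¬ ∃ R₂ : T → ℝ, ∀ ξ : ℕ → T,
      (∑' j : ℕ, γ^j * R₂ (ξ j)) = Real.log (∑' j : ℕ, γ^j * R₁ (ξ j)) := by
  rintro ⟨R₂, hR₂⟩
  push_neg at hnc
  obtain ⟨ξ, ξ', hab⟩ := hnc
  have hγ0 : (0:ℝ) ≤ γ := le_trans (by norm_num) hγ
  haveI : Nonempty T := ⟨ξ 0⟩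
  -- R₁ is not constant
  have hRnc : ∃ t₁ t₂ : T, R₁ t₁ ≠ R₁ t₂ := by
    by_contra h
    push_neg at h
    exact hab (tsum_congr fun j => by rw [h (ξ j) (ξ' j)])
  obtain ⟨t₁, t₂, ht⟩ := hRnc
  set a := ∑' j : ℕ, γ^j * R₁ (ξ j) with ha
  set b := ∑' j : ℕ, γ^j * R₁ (ξ' j) with hb
  -- the key functional equation
  have key : ∀ (t : T) (ζ : ℕ → T),
      R₂ t + γ * Real.log (∑' j : ℕ, γ^j * R₁ (ζ j))
        = Real.log (R₁ t + γ * ∑' j : ℕ, γ^j * R₁ (ζ j)) := by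
    intro t ζ
    have h1 := hR₂ (fun n => Nat.casesOn n t ζ)
    rw [cons_aux γ hγ0 hγ1 R₂ t ζ, cons_aux γ hγ0 hγ1 R₁ t ζ, hR₂ ζ] at h1
    exact h1
  have E1 := key t₁ ξ
  have E2 := key t₁ ξ'
  have E3 := key t₂ ξ
  have E4 := key t₂ ξ'
  rw [← ha] at E1 E3
  rw [← hb] at E2 E4
  -- positivity of the four arguments
  have P : ∀ (t : T) (ζ : ℕ → T), 0 < R₁ t + γ * ∑' j : ℕ, γ^j * R₁ (ζ j) := by
    intro t ζ
    have := hpos (fun n => Nat.casesOn n t ζ)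
    rwa [cons_aux γ hγ0 hγ1 R₁ t ζ] at this
  have P1 : 0 < R₁ t₁ + γ * a := P t₁ ξ
  have P2 : 0 < R₁ t₁ + γ * b := P t₁ ξ'
  have P3 : 0 < R₁ t₂ + γ * a := P t₂ ξ
  have P4 : 0 < R₁ t₂ + γ * b := P t₂ ξ'
  have hlog : Real.log ((R₁ t₁ + γ * a) * (R₁ t₂ + γ * b))
      = Real.log ((R₁ t₁ + γ * b) * (R₁ t₂ + γ * a)) := by
    rw [Real.log_mul (ne_of_gt P1) (ne_of_gt P4),
        Real.log_mul (ne_of_gt P2) (ne_of_gt P3)]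
    linarith [E1, E2, E3, E4]
  have heq : (R₁ t₁ + γ * a) * (R₁ t₂ + γ * b)
      = (R₁ t₁ + γ * b) * (R₁ t₂ + γ * a) := by
    have := congrArg Real.exp hlog
    rwa [Real.exp_log (by positivity), Real.exp_log (by positivity)] at this
  have hz : γ * ((R₁ t₁ - R₁ t₂) * (b - a)) = 0 := by nlinarith [heq]
  rcases mul_eq_zero.mp hz with h | h
  · linarith
  · rcases mul_eq_zero.mp h with h' | h'
    · exact ht (by linarith)
    · exact hab (by linarith)
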